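/- Let A be a Poisson algebra with Poisson enveloping algebra (U(A), α, β). Then ξ := α ⊗ α ⊗ β + α ⊗ β ⊗ α + β ⊗ α ⊗ α : A ⊗ A ⊗ A → U(A) ⊗ U(A)^op ⊗ U(A) is a Lie algebra homomorphism, where A ⊗ A ⊗ A carries the Lie bracket {a⊗b⊗c, a'⊗b'⊗c'} = {a,a'}⊗bb'⊗cc' − aa'⊗{b,b'}⊗cc' + aa'⊗bb'⊗{c,c'} and U(A) ⊗ U(A)^op ⊗ U(A) carries the commutator bracket of the tensor product algebra. -/
import Mathlib


open TensorProduct MulOpposite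

noncomputable section

universe u v

variable (k : Type*) [Field k]

section Defs

variable (A : Type u) [CommRing A] [Algebra k A]

abbrev T3 := A ⊗[k] (A ⊗[k] A)

structure IsPoissonBracket (br : A →ₗ[k] A →ₗ[k] A) : Prop where
  self : ∀ a : A, br a a = 0
  jacobi : ∀ a b c : A, br a (br b c) + br b (br c a) + br c (br a b) = 0
  leibniz : ∀ a b c : A, br a (b * c) = br a b * c + b * br a c

/-- `{a⊗b⊗c, a'⊗b'⊗c'} = {a,a'}⊗bb'⊗cc' - aa'⊗{b,b'}⊗cc' + aa'⊗bb'⊗{c,c'}`. -/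
def pbrT3 (br : A →ₗ[k] A →ₗ[k] A) (u v : T3 k A) : T3 k A :=
  TensorProduct.map₂ br
      (TensorProduct.map₂ (LinearMap.mul k A) (LinearMap.mul k A)) u v
    - TensorProduct.map₂ (LinearMap.mul k A)
        (TensorProduct.map₂ br (LinearMap.mul k A)) u v
    + TensorProduct.map₂ (LinearMap.mul k A)
        (TensorProduct.map₂ (LinearMap.mul k A) br) u v

/-- `(U, α, β)` is the Poisson enveloping algebra of the Poisson algebra `(A, br)`:
`α` is an algebra map, `β` a Lie map (for the commutator), they satisfy
`α({a,b}) = [β(a), α(b)]`, `β(ab) = α(a)β(b) + α(b)β(a)`, and the triple is universal. -/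
structure IsPoissonEnveloping (br : A → A → A) (U : Type v) [Ring U] [Algebra k U]
    (α : A →ₐ[k] U) (β : A →ₗ[k] U) : Prop where
  lie : ∀ a b : A, β (br a b) = β a * β b - β b * β a
  cross : ∀ a b : A, α (br a b) = β a * α b - α b * β a
  der : ∀ a b : A, β (a * b) = α a * β b + α b * β a
  univ : ∀ (B : Type (max u v)) [Ring B] [Algebra k B] (γ : A →ₐ[k] B) (δ : A →ₗ[k] B),
    (∀ a b : A, δ (br a b) = δ a * δ b - δ b * δ a) →
    (∀ a b : A, γ (br a b) = δ a * γ b - γ b * δ a) →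
    (∀ a b : A, δ (a * b) = γ a * δ b + γ b * δ a) →
    ∃! h : U →ₐ[k] B, (∀ a : A, h (α a) = γ a) ∧ (∀ a : A, h (β a) = δ a)

end Defs

section Xi

variable (A : Type u) [CommRing A] [Algebra k A]
variable (U : Type v) [Ring U] [Algebra k U]

/-- `ξ = α ⊗ α ⊗ β + α ⊗ β ⊗ α + β ⊗ α ⊗ α : A ⊗ A ⊗ A → U ⊗ Uᵒᵖ ⊗ U`. -/
def xiMap (α : A →ₐ[k] U) (β : A →ₗ[k] U) :
    T3 k A →ₗ[k] U ⊗[k] (Uᵐᵒᵖ ⊗[k] U) :=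
  TensorProduct.map α.toLinearMap
      (TensorProduct.map
        ((opLinearEquiv k : U ≃ₗ[k] Uᵐᵒᵖ).toLinearMap ∘ₗ α.toLinearMap) β)
    + TensorProduct.map α.toLinearMap
        (TensorProduct.map
          ((opLinearEquiv k : U ≃ₗ[k] Uᵐᵒᵖ).toLinearMap ∘ₗ β) α.toLinearMap)
    + TensorProduct.map β
        (TensorProduct.map
          ((opLinearEquiv k : U ≃ₗ[k] Uᵐᵒᵖ).toLinearMap ∘ₗ α.toLinearMap) α.toLinearMap)

end Xi


section Aux

variable (A : Type u) [CommRing A] [Algebra k A]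
variable (U : Type v) [Ring U] [Algebra k U]

set_option maxHeartbeats 2000000 in
theorem key_aux (br : A →ₗ[k] A →ₗ[k] A) (hbr : IsPoissonBracket k A br)
    (α : A →ₐ[k] U) (β : A →ₗ[k] U)
    (henv : IsPoissonEnveloping k A (fun a b => br a b) U α β)
    (a b c a' b' c' : A) :
    xiMap k A U α β (pbrT3 k A br (a ⊗ₜ[k] (b ⊗ₜ[k] c)) (a' ⊗ₜ[k] (b' ⊗ₜ[k] c'))) =
      xiMap k A U α β (a ⊗ₜ[k] (b ⊗ₜ[k] c)) * xiMap k A U α β (a' ⊗ₜ[k] (b' ⊗ₜ[k] c'))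
        - xiMap k A U α β (a' ⊗ₜ[k] (b' ⊗ₜ[k] c')) * xiMap k A U α β (a ⊗ₜ[k] (b ⊗ₜ[k] c)) := by
  have h_lie : ∀ x y : A, β (br x y) = β x * β y - β y * β x := henv.lie
  have h_cross : ∀ x y : A, α (br x y) = β x * α y - α y * β x := henv.cross
  have h_der : ∀ x y : A, β (x * y) = α x * β y + α y * β x := henv.der
  have hskew : ∀ x y : A, br y x = - br x y := by
    intro x y
    have h := hbr.self (x + y)
    simp only [map_add, LinearMap.add_apply, hbr.self, zero_add, add_zero] at h
    exact eq_neg_of_add_eq_zero_left h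
  have hBA : ∀ x y : A, β x * α y = α y * β x + α (br x y) := by
    intro x y; rw [h_cross x y]; abel
  have hAA : ∀ x y : A, (α x : U) * α y = α (x * y) := fun x y => (map_mul α x y).symm
  have hop : ∀ x y : U, op x * op y = op (y * x) := fun x y => (op_mul y x).symm
  have dR : ∀ x y w : U ⊗[k] (Uᵐᵒᵖ ⊗[k] U), (x + y) * w = x * w + y * w :=
    fun x y w => Distrib.right_distrib x y w
  have dL : ∀ x y w : U ⊗[k] (Uᵐᵒᵖ ⊗[k] U), x * (y + w) = x * y + x * w :=
    fun x y w => Distrib.left_distrib x y w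
  simp only [pbrT3, LinearMap.sub_apply, LinearMap.add_apply,
    TensorProduct.map₂_apply_tmul, TensorProduct.map_tmul, LinearMap.mul_apply',
    map_add, map_sub]
  simp only [xiMap, LinearMap.add_apply, TensorProduct.map_tmul,
    LinearMap.coe_comp, Function.comp_apply, LinearEquiv.coe_coe,
    MulOpposite.coe_opLinearEquiv, AlgHom.toLinearMap_apply]
  simp only [Algebra.TensorProduct.tmul_mul_tmul, dR, dL,
    tmul_add, add_tmul, tmul_sub, sub_tmul, tmul_neg, neg_tmul,
    h_lie, h_der, hBA, hAA, hop, hskew a a', hskew b b', hskew c c',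
    map_neg, mul_comm a' a, mul_comm b' b, mul_comm c' c, op_add, op_neg, op_sub]
  abel

end Aux

set_option maxHeartbeats 4000000 in
/-- If `(U(A), α, β)` is the Poisson enveloping algebra of a Poisson algebra `A`, then
`ξ = α⊗α⊗β + α⊗β⊗α + β⊗α⊗α : A⊗A⊗A → U(A) ⊗ U(A)ᵒᵖ ⊗ U(A)` is a Lie algebra
homomorphism for the tensor Poisson bracket and the commutator bracket. -/
theorem stmt15 (A : Type u) [CommRing A] [Algebra k A]
    (U : Type v) [Ring U] [Algebra k U]
    (br : A →ₗ[k] A →ₗ[k] A) (hbr : IsPoissonBracket k A br)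
    (α : A →ₐ[k] U) (β : A →ₗ[k] U)
    (henv : IsPoissonEnveloping k A (fun a b => br a b) U α β) :
    ∀ u v : T3 k A,
      xiMap k A U α β (pbrT3 k A br u v) =
        xiMap k A U α β u * xiMap k A U α β v
          - xiMap k A U α β v * xiMap k A U α β u := by
  intro u v
  have dR : ∀ x y w : U ⊗[k] (Uᵐᵒᵖ ⊗[k] U), (x + y) * w = x * w + y * w :=
    fun x y w => Distrib.right_distrib x y w
  have dL : ∀ x y w : U ⊗[k] (Uᵐᵒᵖ ⊗[k] U), x * (y + w) = x * y + x * w :=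
    fun x y w => Distrib.left_distrib x y w
  have zR : ∀ w : U ⊗[k] (Uᵐᵒᵖ ⊗[k] U), (0 : U ⊗[k] (Uᵐᵒᵖ ⊗[k] U)) * w = 0 :=
    fun w => zero_mul w
  have zL : ∀ w : U ⊗[k] (Uᵐᵒᵖ ⊗[k] U), w * (0 : U ⊗[k] (Uᵐᵒᵖ ⊗[k] U)) = 0 :=
    fun w => mul_zero w
  induction u using TensorProduct.induction_on with
  | zero =>
    have z : pbrT3 k A br 0 v = 0 := by
      simp only [pbrT3, map_zero, LinearMap.zero_apply]; abel
    rw [z, map_zero, zR, zL]; exact (sub_self (0 : U ⊗[k] (Uᵐᵒᵖ ⊗[k] U))).symm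
  | add u1 u2 h1 h2 =>
    have e : pbrT3 k A br (u1 + u2) v = pbrT3 k A br u1 v + pbrT3 k A br u2 v := by
      simp only [pbrT3, map_add, LinearMap.add_apply]; abel
    rw [e, map_add, h1, h2, map_add, dR, dL]
    abel
  | tmul a y =>
    induction y using TensorProduct.induction_on with
    | zero =>
      rw [tmul_zero]
      have z : pbrT3 k A br 0 v = 0 := by
        simp only [pbrT3, map_zero, LinearMap.zero_apply]; abel
      rw [z, map_zero, zR, zL]; exact (sub_self (0 : U ⊗[k] (Uᵐᵒᵖ ⊗[k] U))).symm
    | add y1 y2 h1 h2 =>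
      rw [tmul_add]
      have e : pbrT3 k A br (a ⊗ₜ[k] y1 + a ⊗ₜ[k] y2) v
          = pbrT3 k A br (a ⊗ₜ[k] y1) v + pbrT3 k A br (a ⊗ₜ[k] y2) v := by
        simp only [pbrT3, map_add, LinearMap.add_apply]; abel
      rw [e, map_add, h1, h2, map_add, dR, dL]
      abel
    | tmul b c =>
      induction v using TensorProduct.induction_on with
      | zero =>
        have z : pbrT3 k A br (a ⊗ₜ[k] (b ⊗ₜ[k] c)) 0 = 0 := by
          simp only [pbrT3, map_zero]; abel
        rw [z, map_zero, zR, zL]; exact (sub_self (0 : U ⊗[k] (Uᵐᵒᵖ ⊗[k] U))).symm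
      | add v1 v2 h1 h2 =>
        have e : pbrT3 k A br (a ⊗ₜ[k] (b ⊗ₜ[k] c)) (v1 + v2)
            = pbrT3 k A br (a ⊗ₜ[k] (b ⊗ₜ[k] c)) v1 + pbrT3 k A br (a ⊗ₜ[k] (b ⊗ₜ[k] c)) v2 := by
          simp only [pbrT3, map_add]; abel
        rw [e, map_add, h1, h2, map_add, dL, dR]
        abel
      | tmul a' y' =>
        induction y' using TensorProduct.induction_on with
        | zero =>
          rw [tmul_zero]
          have z : pbrT3 k A br (a ⊗ₜ[k] (b ⊗ₜ[k] c)) 0 = 0 := by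
            simp only [pbrT3, map_zero]; abel
          rw [z, map_zero, zR, zL]; exact (sub_self (0 : U ⊗[k] (Uᵐᵒᵖ ⊗[k] U))).symm
        | add y1 y2 h1 h2 =>
          rw [tmul_add]
          have e : pbrT3 k A br (a ⊗ₜ[k] (b ⊗ₜ[k] c)) (a' ⊗ₜ[k] y1 + a' ⊗ₜ[k] y2)
              = pbrT3 k A br (a ⊗ₜ[k] (b ⊗ₜ[k] c)) (a' ⊗ₜ[k] y1)
                + pbrT3 k A br (a ⊗ₜ[k] (b ⊗ₜ[k] c)) (a' ⊗ₜ[k] y2) := by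
            simp only [pbrT3, map_add]; abel
          rw [e, map_add, h1, h2, map_add, dL, dR]
          abel
        | tmul b' c' =>
          exact key_aux k A U br hbr α β henv a b c a' b' c'
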